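/- Let e : [0,T] → ℝ≥0 be continuously differentiable with e(0) = 0, and suppose there are nonnegative integrable functions d, a, b on [0,T] such that for all t, e(t)² + ∫₀ᵗ d(s) ds ≤ (∫₀ᵀ a)^{1/2} (∫₀ᵀ d)^{1/2} + (∫₀ᵀ e²)^{1/2} (∫₀ᵀ b)^{1/2}. Then max_{[0,T]} e(t)² + ∫₀ᵀ d ≤ C ∫₀ᵀ (a + b) for a constant C depending only on T. -/
import Mathlib


open Set intervalIntegral

/-- Young-inequality absorption: if e(0)=0, e ≥ 0 and
e(t)² + ∫₀ᵗ d ≤ √(∫₀ᵀ a)·√(∫₀ᵀ d) + √(∫₀ᵀ e²)·√(∫₀ᵀ b) on [0,T],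
then max_{[0,T]} e² + ∫₀ᵀ d ≤ C ∫₀ᵀ (a+b), with C depending only on T. -/
theorem stmt_16 (T : ℝ) (hT : 0 < T) :
    ∃ C : ℝ, 0 < C ∧
      ∀ e dd a b : ℝ → ℝ,
        ContDiff ℝ 1 e → e 0 = 0 →
        (∀ t ∈ Icc (0 : ℝ) T, 0 ≤ e t) →
        (∀ t ∈ Icc (0 : ℝ) T, 0 ≤ dd t ∧ 0 ≤ a t ∧ 0 ≤ b t) →
        IntervalIntegrable dd MeasureTheory.volume 0 T →
        IntervalIntegrable a MeasureTheory.volume 0 T →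
        IntervalIntegrable b MeasureTheory.volume 0 T →
        (∀ t ∈ Icc (0 : ℝ) T,
          e t ^ 2 + ∫ s in (0 : ℝ)..t, dd s ≤
            Real.sqrt (∫ s in (0 : ℝ)..T, a s) * Real.sqrt (∫ s in (0 : ℝ)..T, dd s) +
            Real.sqrt (∫ s in (0 : ℝ)..T, e s ^ 2) * Real.sqrt (∫ s in (0 : ℝ)..T, b s)) →
        ∀ t ∈ Icc (0 : ℝ) T,
          e t ^ 2 + ∫ s in (0 : ℝ)..T, dd s ≤ C * ∫ s in (0 : ℝ)..T, (a s + b s) := by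
  refine ⟨4 * (1 + T), by positivity, ?_⟩
  intro e dd a b he he0 hepos hnn hdd ha hb H t ht
  have hT0 : (0 : ℝ) ≤ T := hT.le
  set A := ∫ s in (0 : ℝ)..T, a s with hA
  set B := ∫ s in (0 : ℝ)..T, b s with hB
  set D := ∫ s in (0 : ℝ)..T, dd s with hD
  set E := ∫ s in (0 : ℝ)..T, e s ^ 2 with hE
  set M := Real.sqrt A * Real.sqrt D + Real.sqrt E * Real.sqrt B with hM
  have hAnn : 0 ≤ A := intervalIntegral.integral_nonneg hT0 fun s hs => (hnn s hs).2.1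
  have hBnn : 0 ≤ B := intervalIntegral.integral_nonneg hT0 fun s hs => (hnn s hs).2.2
  have hM0 : 0 ≤ M := by
    have := H 0 ⟨le_refl 0, hT0⟩
    simpa [he0, intervalIntegral.integral_same] using this
  -- pointwise bound e t ^ 2 ≤ M
  have h1 : ∀ u ∈ Icc (0 : ℝ) T, e u ^ 2 ≤ M := by
    intro u hu
    have hint : (0 : ℝ) ≤ ∫ s in (0 : ℝ)..u, dd s := by
      apply intervalIntegral.integral_nonneg hu.1
      intro s hs
      exact (hnn s ⟨hs.1, hs.2.trans hu.2⟩).1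
    have := H u hu
    linarith
  have hDM : D ≤ M := by
    have := H T ⟨hT0, le_refl T⟩
    have h2 : 0 ≤ e T ^ 2 := sq_nonneg _
    linarith
  have heint : IntervalIntegrable (fun s => e s ^ 2) MeasureTheory.volume 0 T :=
    ((he.continuous.pow 2)).intervalIntegrable 0 T
  have hEM : E ≤ T * M := by
    have : E ≤ ∫ _ in (0 : ℝ)..T, M := by
      apply intervalIntegral.integral_mono_on hT0 heint (intervalIntegrable_const)
      exact h1
    have h2 : (∫ _ in (0 : ℝ)..T, M) = T * M := by
      rw [intervalIntegral.integral_const, smul_eq_mul, sub_zero]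
    linarith [this.trans_eq h2]
  have hEnn : 0 ≤ E := intervalIntegral.integral_nonneg hT0 fun s _ => sq_nonneg _
  -- absorb
  have hkey : M ≤ Real.sqrt M * (Real.sqrt A + Real.sqrt T * Real.sqrt B) := by
    have h2 : Real.sqrt D ≤ Real.sqrt M := Real.sqrt_le_sqrt hDM
    have h3 : Real.sqrt E ≤ Real.sqrt T * Real.sqrt M := by
      rw [← Real.sqrt_mul hT0]
      exact Real.sqrt_le_sqrt hEM
    have h4 : 0 ≤ Real.sqrt A := Real.sqrt_nonneg _
    have h5 : 0 ≤ Real.sqrt B := Real.sqrt_nonneg _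
    nlinarith [Real.sqrt_nonneg M, Real.sqrt_nonneg T, Real.sqrt_nonneg D, Real.sqrt_nonneg E]
  have hMbound : M ≤ 2 * A + 2 * (T * B) := by
    have hS : 0 ≤ Real.sqrt A + Real.sqrt T * Real.sqrt B := by positivity
    have hsqM : Real.sqrt M * Real.sqrt M = M := Real.mul_self_sqrt hM0
    have hMle : M ≤ (Real.sqrt A + Real.sqrt T * Real.sqrt B) ^ 2 := by
      rcases eq_or_lt_of_le hM0 with h | h
      · nlinarith
      · have hrt : 0 < Real.sqrt M := Real.sqrt_pos.mpr h
        have : Real.sqrt M ≤ Real.sqrt A + Real.sqrt T * Real.sqrt B := by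
          nlinarith
        nlinarith
    have e1 : Real.sqrt A ^ 2 = A := Real.sq_sqrt hAnn
    have e2 : Real.sqrt B ^ 2 = B := Real.sq_sqrt hBnn
    have e3 : Real.sqrt T ^ 2 = T := Real.sq_sqrt hT0
    nlinarith [sq_nonneg (Real.sqrt A - Real.sqrt T * Real.sqrt B)]
  have hsum : (∫ s in (0 : ℝ)..T, (a s + b s)) = A + B :=
    intervalIntegral.integral_add ha hb
  rw [hsum]
  have het : e t ^ 2 ≤ M := h1 t ht
  nlinarith [hAnn, hBnn]
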